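/- For a prime p ≥ 3 (or more generally for any a ∈ Δ_p with |a|_p > 1) and s with |s|_p < p^{(p-2)/(p-1)}, the p-adic series Σ_{k=0}^∞ C(1-s, k) B_k a^{-k} converges in ℂ_p, where C(1-s,k) is the binomial coefficient and B_k are Bernoulli numbers. -/

import Mathlib

lemma fact_inv_norm_le (p : ℕ) [hp : Fact p.Prime] (m : ℕ) (hm : 1 ≤ m) :
    ‖((m.factorial : ℚ_[p]))⁻¹‖ ≤ (p : ℝ) ^ (((m : ℝ) - 1) / ((p : ℝ) - 1)) := by
  have hp1 : (1:ℝ) < p := by exact_mod_cast hp.out.one_lt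
  have hne : ((m.factorial : ℚ_[p])) ≠ 0 := Nat.cast_ne_zero.mpr m.factorial_ne_zero
  rw [norm_inv, Padic.norm_eq_zpow_neg_valuation hne, Padic.valuation_natCast, ← zpow_neg, neg_neg,
    ← Real.rpow_intCast]
  apply Real.rpow_le_rpow_of_exponent_le hp1.le
  rw [le_div_iff₀ (by linarith : (0:ℝ) < (p:ℝ) - 1)]
  have hS : 1 ≤ (p.digits m).sum := by
    rcases Nat.eq_zero_or_pos (p.digits m).sum with h | h
    · exfalso
      have hnil : p.digits m ≠ [] := Nat.digits_ne_nil_iff_ne_zero.mpr (by omega)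
      have hlast := Nat.getLast_digit_ne_zero p (show m ≠ 0 by omega)
      exact hlast (List.sum_eq_zero_iff.mp h _ (List.getLast_mem hnil))
    · exact h
  have hkey := sub_one_mul_padicValNat_factorial (p := p) m
  have h2 : (p - 1) * padicValNat p m.factorial ≤ m - 1 := by omega
  have hp2 : 2 ≤ p := hp.out.two_le
  have h3 : ((p - 1) * padicValNat p m.factorial : ℕ) ≤ ((m - 1 : ℕ) : ℝ) := by
    exact_mod_cast Nat.cast_le.mpr h2
  push_cast [Nat.cast_sub (by omega : 1 ≤ p), Nat.cast_sub hm] at h3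
  have h4 : ((padicValNat p m.factorial : ℤ) : ℝ) = (padicValNat p m.factorial : ℝ) := by
    exact Int.cast_natCast _
  rw [h4]
  linarith [h3]

lemma bern_div_fact_norm_le (p : ℕ) [hp : Fact p.Prime] (n : ℕ) :
    ‖((bernoulli n : ℚ_[p]) / (n.factorial : ℚ_[p]))‖ ≤
      (p : ℝ) ^ ((n : ℝ) / ((p : ℝ) - 1)) := by
  induction n using Nat.strong_induction_on with
  | _ n ih =>
    match n with
    | 0 => simp
    | (n+1) =>
      have hp1 : (1:ℝ) < p := by exact_mod_cast hp.out.one_lt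
      have hfac : ∀ m : ℕ, ((m.factorial : ℚ_[p])) ≠ 0 :=
        fun m => Nat.cast_ne_zero.mpr m.factorial_ne_zero
      -- the recursion
      have hQ : (∑ k ∈ Finset.range (n+2), ((n+2).choose k : ℚ_[p]) * (bernoulli k : ℚ_[p])) = 0 := by
        have := sum_bernoulli (n+2)
        rw [if_neg (by omega)] at this
        have := congrArg (fun q : ℚ => (q : ℚ_[p])) this
        push_cast at this
        simpa using this
      have hterm : ∀ k ∈ Finset.range (n+2), ((n+2).choose k : ℚ_[p]) * (bernoulli k : ℚ_[p]) =
          ((bernoulli k : ℚ_[p]) / (k.factorial : ℚ_[p]) * (((n+2-k).factorial : ℚ_[p]))⁻¹) *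
            ((n+2).factorial : ℚ_[p]) := by
        intro k hk
        rw [Finset.mem_range] at hk
        have hc : (n+2).choose k * k.factorial * (n+2-k).factorial = (n+2).factorial :=
          Nat.choose_mul_factorial_mul_factorial (by omega)
        have hc' : (((n+2).choose k : ℚ_[p])) * (k.factorial : ℚ_[p]) * ((n+2-k).factorial : ℚ_[p])
            = ((n+2).factorial : ℚ_[p]) := by exact_mod_cast congrArg (fun m : ℕ => (m : ℚ_[p])) hc
        rw [← hc']
        field_simp [hfac k, hfac (n+2-k)]
      rw [Finset.sum_congr rfl hterm, ← Finset.sum_mul] at hQ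
      have hsum : (∑ k ∈ Finset.range (n+2),
          (bernoulli k : ℚ_[p]) / (k.factorial : ℚ_[p]) * (((n+2-k).factorial : ℚ_[p]))⁻¹) = 0 :=
        by
        rcases mul_eq_zero.mp hQ with h | h
        · exact h
        · exact absurd h (hfac _)
      rw [Finset.sum_range_succ] at hsum
      have hlast : (bernoulli (n+1) : ℚ_[p]) / ((n+1).factorial : ℚ_[p]) *
          (((n+2-(n+1)).factorial : ℚ_[p]))⁻¹ = (bernoulli (n+1) : ℚ_[p]) / ((n+1).factorial : ℚ_[p]) := by
        simp [show n+2-(n+1) = 1 by omega]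
      rw [hlast] at hsum
      have hrec : (bernoulli (n+1) : ℚ_[p]) / ((n+1).factorial : ℚ_[p]) =
          -∑ k ∈ Finset.range (n+1),
            (bernoulli k : ℚ_[p]) / (k.factorial : ℚ_[p]) * (((n+2-k).factorial : ℚ_[p]))⁻¹ := by
        linear_combination hsum
      rw [hrec, norm_neg]
      apply IsUltrametricDist.norm_sum_le_of_forall_le_of_nonneg
        (Real.rpow_nonneg (by positivity) _)
      intro k hk
      rw [Finset.mem_range] at hk
      calc ‖(bernoulli k : ℚ_[p]) / (k.factorial : ℚ_[p]) * (((n+2-k).factorial : ℚ_[p]))⁻¹‖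
          = ‖(bernoulli k : ℚ_[p]) / (k.factorial : ℚ_[p])‖ * ‖(((n+2-k).factorial : ℚ_[p]))⁻¹‖ :=
            norm_mul _ _
        _ ≤ (p : ℝ) ^ ((k : ℝ) / ((p : ℝ) - 1)) *
              (p : ℝ) ^ ((((n+2-k : ℕ) : ℝ) - 1) / ((p : ℝ) - 1)) :=
            mul_le_mul (ih k (by omega)) (fact_inv_norm_le p (n+2-k) (by omega)) (norm_nonneg _)
              (Real.rpow_nonneg (by positivity) _)
        _ = (p : ℝ) ^ (((n+1 : ℕ) : ℝ) / ((p : ℝ) - 1)) := by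
            rw [← Real.rpow_add (by positivity), ← add_div]
            congr 1
            push_cast [Nat.cast_sub (show k ≤ n+2 by omega)]
            ring

lemma norm_ge_p_of_one_lt (p : ℕ) [hp : Fact p.Prime] (x : ℚ_[p]) (hx : 1 < ‖x‖) :
    (p : ℝ) ≤ ‖x‖ := by
  have hp1 : (1:ℝ) < p := by exact_mod_cast hp.out.one_lt
  have hx0 : x ≠ 0 := by rintro rfl; simp at hx; linarith
  rw [Padic.norm_eq_zpow_neg_valuation hx0] at hx ⊢
  have h0 : (0:ℤ) < -x.valuation := by
    by_contra h
    push_neg at h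
    have h1 : (p:ℝ) ^ (-x.valuation) ≤ (p:ℝ) ^ (0:ℤ) := zpow_le_zpow_right₀ hp1.le h
    rw [zpow_zero] at h1
    linarith
  calc (p:ℝ) = (p:ℝ) ^ (1:ℤ) := (zpow_one _).symm
    _ ≤ (p:ℝ) ^ (-x.valuation) := zpow_le_zpow_right₀ hp1.le (by omega)

/-- For an odd prime `p`, `a ∈ ℚ_p` with `|a|_p > 1` and `s` with
`|s|_p < p^{(p-2)/(p-1)}`, the series `Σ_k C(1-s,k) B_k a^{-k}` converges
`p`-adically, where `C(1-s,k) = (1-s)(-s)⋯(2-s-k)/k!` is the generalized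
binomial coefficient and `B_k` are the Bernoulli numbers. -/
theorem stmt_11 (p : ℕ) [Fact p.Prime] (hp : 3 ≤ p) (a : ℚ_[p]) (ha : 1 < ‖a‖)
    (s : ℚ_[p]) (hs : ‖s‖ < (p : ℝ) ^ (((p : ℝ) - 2) / ((p : ℝ) - 1))) :
    Summable (fun k : ℕ =>
      ((∏ i ∈ Finset.range k, (1 - s - (i : ℚ_[p]))) / (k.factorial : ℚ_[p])) *
        (bernoulli k : ℚ_[p]) * (a⁻¹) ^ k) := by
  have hfp : Fact p.Prime := inferInstance
  have hp1 : (1:ℝ) < p := by exact_mod_cast hfp.out.one_lt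
  have hpR : (3:ℝ) ≤ p := by exact_mod_cast hp
  -- ‖s‖ ≤ 1
  have hs1 : ‖s‖ ≤ 1 := by
    by_contra h
    push_neg at h
    have h1 := norm_ge_p_of_one_lt p s h
    have h2 : (p:ℝ) ^ (((p : ℝ) - 2) / ((p : ℝ) - 1)) < (p:ℝ) ^ (1:ℝ) := by
      apply Real.rpow_lt_rpow_of_exponent_lt hp1
      rw [div_lt_one (by linarith)]
      linarith
    rw [Real.rpow_one] at h2
    linarith
  -- ‖a⁻¹‖ ≤ p⁻¹
  have hainv : ‖a⁻¹‖ ≤ (p:ℝ)⁻¹ := by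
    rw [norm_inv]
    exact inv_anti₀ (by linarith) (norm_ge_p_of_one_lt p a ha)
  set r : ℝ := (p:ℝ) ^ ((1:ℝ) / ((p:ℝ) - 1) - 1) with hr
  have hr0 : 0 ≤ r := Real.rpow_nonneg (by linarith) _
  have hr1 : r < 1 := by
    apply Real.rpow_lt_one_of_one_lt_of_neg hp1
    rw [sub_neg, div_lt_one (by linarith)]
    linarith
  apply Summable.of_norm_bounded (summable_geometric_of_lt_one hr0 hr1)
  intro k
  have hre : ((∏ i ∈ Finset.range k, (1 - s - (i : ℚ_[p]))) / (k.factorial : ℚ_[p])) *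
        (bernoulli k : ℚ_[p]) * (a⁻¹) ^ k =
      (∏ i ∈ Finset.range k, (1 - s - (i : ℚ_[p]))) *
        ((bernoulli k : ℚ_[p]) / (k.factorial : ℚ_[p])) * (a⁻¹) ^ k := by ring
  rw [hre]
  -- product has norm ≤ 1
  have hprod : ‖∏ i ∈ Finset.range k, (1 - s - (i : ℚ_[p]))‖ ≤ 1 := by
    rw [norm_prod]
    apply Finset.prod_le_one
    · intro i _; exact norm_nonneg _
    · intro i _
      have h1 : ‖(1:ℚ_[p]) - s‖ ≤ 1 := by
        rw [sub_eq_add_neg]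
        refine (Padic.nonarchimedean _ _).trans ?_
        simp [hs1]
      have h2 : ‖((i:ℕ) : ℚ_[p])‖ ≤ 1 := by
        have := Padic.norm_int_le_one (p := p) (i : ℤ)
        push_cast at this
        exact this
      rw [sub_eq_add_neg]
      refine (Padic.nonarchimedean _ _).trans ?_
      rw [norm_neg]
      exact max_le h1 h2
  calc ‖(∏ i ∈ Finset.range k, (1 - s - (i : ℚ_[p]))) *
        ((bernoulli k : ℚ_[p]) / (k.factorial : ℚ_[p])) * (a⁻¹) ^ k‖
      = ‖∏ i ∈ Finset.range k, (1 - s - (i : ℚ_[p]))‖ *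
        ‖(bernoulli k : ℚ_[p]) / (k.factorial : ℚ_[p])‖ * ‖a⁻¹‖ ^ k := by
        rw [norm_mul, norm_mul, norm_pow]
    _ ≤ 1 * ((p:ℝ) ^ ((k : ℝ) / ((p : ℝ) - 1))) * ((p:ℝ)⁻¹) ^ k := by
        have hb := bern_div_fact_norm_le p k
        have hak : ‖a⁻¹‖ ^ k ≤ ((p:ℝ)⁻¹) ^ k := pow_le_pow_left₀ (norm_nonneg _) hainv k
        exact mul_le_mul (mul_le_mul hprod hb (norm_nonneg _) zero_le_one) hak
          (pow_nonneg (norm_nonneg _) _)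
          (by positivity)
    _ = r ^ k := by
        rw [one_mul, hr, ← Real.rpow_natCast ((p:ℝ) ^ ((1:ℝ) / ((p:ℝ) - 1) - 1)) k,
          ← Real.rpow_mul (by linarith), ← Real.rpow_natCast ((p:ℝ)⁻¹) k,
          ← Real.rpow_neg_one (p:ℝ), ← Real.rpow_mul (by linarith) (-1) k,
          ← Real.rpow_add (by linarith)]
        congr 1
        ring
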